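/- Let α ≥ 1 and let P be a polynomial over ℂ with natural degree 2α that is palindromic, i.e. P.coeff i = P.coeff (2α − i) for every i ≤ 2α, and suppose P has no root on the unit circle (P(z) ≠ 0 whenever |z| = 1). Then the contour integral over the unit circle ∮_{|z|=1} [ (deriv (fun z => P.eval z) z) / (P.eval z) − α / z ] dz = 0. -/

import Mathlib

set_option maxHeartbeats 1000000

open Polynomial

open Metric Real Complex in
private lemma myIntegral_add {f g : ℂ → ℂ} {c : ℂ} {R : ℝ} (hf : CircleIntegrable f c R)
    (hg : CircleIntegrable g c R) :
    (∮ z in C(c, R), (f z + g z)) = (∮ z in C(c, R), f z) + ∮ z in C(c, R), g z := by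
  simp only [circleIntegral, smul_add, intervalIntegral.integral_add hf.out hg.out]

open Metric Real Complex in
private lemma aux_logDeriv (c : ℂ) (hc : c ≠ 0) (s : Multiset ℂ) (z : ℂ)
    (h : ∀ r ∈ s, z ≠ r) :
    logDeriv (fun w => Polynomial.eval w (C c * (s.map fun r => X - C r).prod)) z
      = (s.map fun r => (z - r)⁻¹).sum := by
  have hev : ∀ (t : Multiset ℂ) (w : ℂ), Polynomial.eval w (C c * (t.map fun r => X - C r).prod)
      = c * (t.map fun r => w - r).prod := by
    intro t w
    rw [eval_mul, eval_C, eval_multiset_prod, Multiset.map_map]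
    simp [Function.comp]
  induction s using Multiset.induction with
  | empty => simp
  | cons a s ih =>
    have hz : ∀ r ∈ s, z ≠ r := fun r hr => h r (Multiset.mem_cons_of_mem hr)
    have hfun : (fun w => Polynomial.eval w (C c * ((a ::ₘ s).map fun r => X - C r).prod))
        = fun w => (w - a) * Polynomial.eval w (C c * (s.map fun r => X - C r).prod) := by
      funext w
      simp only [Multiset.map_cons, Multiset.prod_cons, eval_mul, eval_sub, eval_X, eval_C]
      ring
    rw [hfun, Multiset.map_cons, Multiset.sum_cons]
    have h1 : z - a ≠ 0 := sub_ne_zero.mpr (h a (Multiset.mem_cons_self a s))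
    have h2 : Polynomial.eval z (C c * (s.map fun r => X - C r).prod) ≠ 0 := by
      rw [hev]
      refine mul_ne_zero hc (Multiset.prod_ne_zero ?_)
      simp only [Multiset.mem_map]
      rintro ⟨r, hr, hr0⟩
      exact sub_ne_zero.mpr (hz r hr) hr0
    rw [logDeriv_mul z h1 h2 (by fun_prop) (Polynomial.differentiableAt _), ih hz]
    congr 1
    rw [logDeriv_apply]
    simp

open Metric Real Complex in
private lemma aux_reverse_prod (s : Multiset ℂ) (h : ∀ r ∈ s, r ≠ 0) :
    ((s.map fun r => X - C r).prod).reverse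
      = C ((s.map fun r => -r).prod) * (s.map fun r => X - C r⁻¹).prod := by
  induction s using Multiset.induction with
  | empty => simp [reverse, reflect_one]
  | cons a s ih =>
    have ha : a ≠ 0 := h a (Multiset.mem_cons_self a s)
    simp only [Multiset.map_cons, Multiset.prod_cons]
    rw [reverse_mul_of_domain, ih (fun r hr => h r (Multiset.mem_cons_of_mem hr))]
    have hra : (X - C a).reverse = C (-a) * (X - C a⁻¹) := by
      rw [reverse, natDegree_X_sub_C, reflect_sub, reflect_C, reflect_one_X, pow_one]
      have h2 : C (-a) * C a⁻¹ = -1 := by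
        rw [← C_mul]
        simp [ha]
      rw [mul_sub, h2, map_neg]
      ring
    rw [hra, map_mul]
    ring

open Metric Real Complex in
private lemma aux_int_outside {r : ℂ} (hr : 1 < ‖r‖) :
    (∮ z in C((0 : ℂ), 1), (z - r)⁻¹) = 0 := by
  refine circleIntegral_eq_zero_of_differentiable_on_off_countable zero_le_one
    Set.countable_empty ?_ ?_
  · refine ContinuousOn.inv₀ (by fun_prop) ?_
    intro z hz h0
    simp only [mem_closedBall, Complex.dist_eq, sub_zero] at hz
    rw [sub_eq_zero] at h0
    rw [h0] at hz
    linarith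
  · intro z hz
    refine DifferentiableAt.inv (by fun_prop) ?_
    intro h0
    rw [sub_eq_zero] at h0
    simp only [Set.mem_diff, mem_ball, Complex.dist_eq, sub_zero, h0] at hz
    linarith [hz.1]

open Metric Real Complex in
private lemma aux_int_sum (s : Multiset ℂ) (h : ∀ r ∈ s, ‖r‖ ≠ 1) :
    CircleIntegrable (fun z => (s.map fun r => (z - r)⁻¹).sum) 0 1 ∧
    (∮ z in C((0 : ℂ), 1), (s.map fun r => (z - r)⁻¹).sum)
      = (s.map fun r => ∮ z in C((0 : ℂ), 1), (z - r)⁻¹).sum := by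
  induction s using Multiset.induction with
  | empty => simp [circleIntegral]
  | cons a s ih =>
    obtain ⟨ih1, ih2⟩ := ih (fun r hr => h r (Multiset.mem_cons_of_mem hr))
    have hai : CircleIntegrable (fun z => (z - a)⁻¹) 0 1 := by
      rw [circleIntegrable_sub_inv_iff]
      refine Or.inr ?_
      simp only [mem_sphere, Complex.dist_eq, sub_zero, abs_one]
      exact h a (Multiset.mem_cons_self a s)
    constructor
    · simpa only [Multiset.map_cons, Multiset.sum_cons, Pi.add_def] using hai.add ih1
    · simp only [Multiset.map_cons, Multiset.sum_cons]
      rw [myIntegral_add hai ih1, ih2]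

/-- Lemma 2 of the paper (case without zeros on the contour): the winding integral of
the logarithmic derivative of `P(z)/z^α` over the unit circle vanishes for a
palindromic polynomial `P` of degree `2α` with no root on the unit circle. -/
theorem palindromic_log_deriv_circleIntegral_eq_zero
    (α : ℕ) (hα : 1 ≤ α) (P : Polynomial ℂ)
    (hdeg : P.natDegree = 2 * α)
    (hpal : ∀ i ≤ 2 * α, P.coeff i = P.coeff (2 * α - i))
    (hroot : ∀ z : ℂ, ‖z‖ = 1 → P.eval z ≠ 0) :
    (∮ z in C(0, 1),
      (deriv (fun w => P.eval w) z) / P.eval z - (α : ℂ) / z) = 0 := by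
  classical
  set S := P.roots with hSdef
  have hPne : P ≠ 0 := fun h => hroot 1 (by simp) (by simp [h])
  have hc : P.leadingCoeff ≠ 0 := leadingCoeff_ne_zero.mpr hPne
  have hcard : Multiset.card S = 2 * α := by
    rw [hSdef, ← hdeg]
    exact Polynomial.splits_iff_card_roots.mp (IsAlgClosed.splits P)
  have hfac : C P.leadingCoeff * (S.map fun r => X - C r).prod = P :=
    C_leadingCoeff_mul_prod_multiset_X_sub_C (by rw [hcard, hdeg])
  have hroots : ∀ r ∈ S, P.eval r = 0 := fun r hr =>
    (Polynomial.mem_roots hPne).mp hr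
  have hrabs : ∀ r ∈ S, ‖r‖ ≠ 1 := fun r hr h1 => hroot r h1 (hroots r hr)
  have h00 : P.coeff 0 ≠ 0 := by
    have h := hpal 0 (Nat.zero_le _)
    rw [h, Nat.sub_zero, ← hdeg]
    exact hc
  have hr0 : ∀ r ∈ S, r ≠ 0 := by
    rintro r hr rfl
    exact h00 (by rw [Polynomial.coeff_zero_eq_eval_zero]; exact hroots 0 hr)
  -- reverse P = P
  have hrev : P.reverse = P := by
    ext i
    rw [coeff_reverse, hdeg]
    rcases le_or_gt i (2 * α) with hi | hi
    · rw [revAt_le hi, ← hpal i hi]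
    · rw [revAt_eq_self_of_lt hi]
  -- S is inversion-invariant
  have hinv : S.map (·⁻¹) = S := by
    have key : P.reverse = C (P.leadingCoeff * (S.map fun r => -r).prod)
        * ((S.map (·⁻¹)).map fun r => X - C r).prod := by
      conv_lhs => rw [← hfac]
      rw [reverse_mul_of_domain, reverse_C, aux_reverse_prod S hr0, C_mul, mul_assoc,
        Multiset.map_map]
      rfl
    have hc' : P.leadingCoeff * (S.map fun r => -r).prod ≠ 0 := by
      refine mul_ne_zero hc (Multiset.prod_ne_zero ?_)
      simp only [Multiset.mem_map]
      rintro ⟨r, hr, hr0'⟩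
      exact hr0 r hr (by simpa using hr0')
    have h2 : P.roots = ((S.map (·⁻¹)).map fun r => X - C r).prod.roots := by
      conv_lhs => rw [← hrev, key]
      rw [Polynomial.roots_C_mul _ hc']
    rw [roots_multiset_prod_X_sub_C] at h2
    exact h2.symm
  -- counting roots inside the circle
  have hAB : S.filter (fun r => ‖r‖ < 1)
      + S.filter (fun r => ¬ ‖r‖ < 1) = S := Multiset.filter_add_not _ _
  have hcardEq : Multiset.card (S.filter fun r => ‖r‖ < 1)
      = Multiset.card (S.filter fun r => ¬ ‖r‖ < 1) := by
    conv_lhs => rw [← hinv, Multiset.filter_map]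
    rw [Multiset.card_map]
    congr 1
    refine Multiset.filter_congr ?_
    intro r hr
    have h0 : 0 < ‖r‖ := norm_pos_iff.mpr (hr0 r hr)
    have h1 : ‖r‖ ≠ 1 := hrabs r hr
    simp only [Function.comp_apply, norm_inv]
    rw [inv_lt_one_iff₀]
    constructor
    · rintro (h | h)
      · exfalso; linarith
      · exact not_lt.mpr h.le
    · intro hge
      exact Or.inr (lt_of_le_of_ne (not_lt.mp hge) (Ne.symm h1))
  have hA : Multiset.card (S.filter fun r => ‖r‖ < 1) = α := by
    have h := congrArg Multiset.card hAB
    rw [Multiset.card_add, hcard, ← hcardEq] at h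
    omega
  -- rewrite the integrand on the circle
  have key : Set.EqOn (fun z => (deriv (fun w => P.eval w) z) / P.eval z - (α : ℂ) / z)
      (fun z => (S.map fun r => (z - r)⁻¹).sum + (-(α : ℂ)) * (z - 0)⁻¹)
      (Metric.sphere (0 : ℂ) 1) := by
    intro z hz
    have hz1 : ‖z‖ = 1 := by
      simpa [Complex.dist_eq] using hz
    have hzr : ∀ r ∈ S, z ≠ r := by
      rintro r hr rfl
      exact hroot z hz1 (hroots z hr)
    have hld := aux_logDeriv P.leadingCoeff hc S z hzr
    rw [show (fun w => Polynomial.eval w (C P.leadingCoeff * (S.map fun r => X - C r).prod))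
        = fun w => P.eval w by rw [hfac]] at hld
    rw [logDeriv_apply] at hld
    simp only
    rw [hld, sub_zero, div_eq_mul_inv]
    ring
  rw [circleIntegral.integral_congr zero_le_one key]
  -- compute the integral
  obtain ⟨hint, hsum⟩ := aux_int_sum S hrabs
  have hbase : CircleIntegrable (fun z => (z - 0)⁻¹) 0 1 := by
    rw [circleIntegrable_sub_inv_iff]
    exact Or.inr (by simp)
  have hint2 : CircleIntegrable (fun z => (-(α : ℂ)) * (z - 0)⁻¹) 0 1 := by
    unfold CircleIntegrable at hbase ⊢
    exact hbase.const_mul _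
  rw [myIntegral_add hint hint2, hsum, circleIntegral.integral_const_mul,
    circleIntegral.integral_sub_inv_of_mem_ball (by simp : (0:ℂ) ∈ Metric.ball (0:ℂ) 1)]
  have hsum2 : (S.map fun r => ∮ z in C((0:ℂ), 1), (z - r)⁻¹).sum
      = (α : ℂ) * (2 * Real.pi * Complex.I) := by
    conv_lhs => rw [← hAB]
    rw [Multiset.map_add, Multiset.sum_add]
    have e1 : ((S.filter fun r => ‖r‖ < 1).map fun r => ∮ z in C((0:ℂ), 1), (z - r)⁻¹)
        = (S.filter fun r => ‖r‖ < 1).map fun _ => (2 * Real.pi * Complex.I : ℂ) := by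
      refine Multiset.map_congr rfl ?_
      intro r hr
      have hlt := (Multiset.mem_filter.mp hr).2
      exact circleIntegral.integral_sub_inv_of_mem_ball
        (by simpa [Complex.dist_eq] using hlt)
    have e2 : ((S.filter fun r => ¬ ‖r‖ < 1).map
          fun r => ∮ z in C((0:ℂ), 1), (z - r)⁻¹)
        = (S.filter fun r => ¬ ‖r‖ < 1).map fun _ => (0 : ℂ) := by
      refine Multiset.map_congr rfl ?_
      intro r hr
      have hge := (Multiset.mem_filter.mp hr).2
      have h1 : ‖r‖ ≠ 1 := hrabs r (Multiset.mem_of_mem_filter hr)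
      exact aux_int_outside (lt_of_le_of_ne (not_lt.mp hge) (Ne.symm h1))
    rw [e1, e2, Multiset.map_const', Multiset.sum_replicate, Multiset.map_const',
      Multiset.sum_replicate, hA]
    simp
  rw [hsum2]
  ring
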